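/- Let m ≥ 1 and let f : ℝ^m → ℝ^m be C² and homogeneous of degree 5. Then for every θ ∈ ℝ^m there exist R > 0, C > 0 and a C² function Z : [R, ∞) → ℝ^m such that Z''(r) + (2/r) Z'(r) + f(Z(r)) = 0 for all r > R, and moreover |Z(r) − θ/r| ≤ C r^{−3} and |Z'(r) + θ/r²| ≤ C r^{−4} for all r ≥ R. -/

import Mathlib

open Set MeasureTheory intervalIntegral BoundedContinuousFunction Filter

open Set MeasureTheory intervalIntegral BoundedContinuousFunction Filter

namespace StatSol

variable {E : Type*} [NormedAddCommGroup E] [NormedSpace ℝ E] [CompleteSpace E]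

lemma norm_int_pow_smul_le {g : ℝ → E} {C : ℝ} (hg : ∀ s, ‖g s‖ ≤ C) (n : ℕ) (τ : ℝ) :
    ‖∫ s in (0:ℝ)..τ, s ^ n • g s‖ ≤ C * |τ| ^ (n + 1) := by
  have h0 : (0:ℝ) ≤ C := le_trans (norm_nonneg _) (hg 0)
  have h := intervalIntegral.norm_integral_le_of_norm_le_const
    (a := 0) (b := τ) (C := |τ| ^ n * C) (f := fun s => s ^ n • g s) ?_
  · calc ‖∫ s in (0:ℝ)..τ, s ^ n • g s‖ ≤ |τ| ^ n * C * |τ - 0| := h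
    _ = C * |τ| ^ (n + 1) := by rw [sub_zero]; ring
  · intro s hs
    have hsτ : |s| ≤ |τ| := by
      rcases le_or_gt 0 τ with h | h
      · rw [uIoc_of_le h] at hs
        rw [abs_of_pos hs.1, abs_of_nonneg h]; exact hs.2
      · rw [uIoc_of_ge h.le] at hs
        rw [abs_of_nonpos hs.2, abs_of_neg h]; linarith [hs.1]
    calc ‖s ^ n • g s‖ = |s| ^ n * ‖g s‖ := by
          rw [norm_smul, Real.norm_eq_abs, abs_pow]
    _ ≤ |τ| ^ n * C := by
        have := hg s
        have := abs_nonneg s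
        gcongr

lemma inv_smul_norm_le {τ : ℝ} {x : E} {C : ℝ} (hC : 0 ≤ C) (hx : ‖x‖ ≤ C * |τ| ^ 3) :
    ‖τ⁻¹ • x‖ ≤ C * |τ| ^ 2 := by
  rcases eq_or_ne τ 0 with rfl | hτ
  · simp only [abs_zero] at hx ⊢
    simp only [norm_smul, norm_inv, Real.norm_eq_abs, abs_zero, inv_zero, zero_mul]
    positivity
  · rw [norm_smul, Real.norm_eq_abs, abs_inv]
    have habs : 0 < |τ| := abs_pos.mpr hτ
    calc |τ|⁻¹ * ‖x‖ ≤ |τ|⁻¹ * (C * (|τ| * |τ| ^ 2)) := by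
          rw [show |τ| * |τ| ^ 2 = |τ| ^ 3 by ring]; gcongr
    _ = C * (|τ|⁻¹ * (|τ| * |τ| ^ 2)) := by ring
    _ = C * |τ| ^ 2 := by rw [inv_mul_cancel_left₀ habs.ne']

set_option maxHeartbeats 1000000 in
/-- Existence of a solution of the singular IVP `v'' + (2/t)•v' + f(v) = 0`, `v(0)=θ`,
`v'(0)=0`, with quantitative bounds, on a small interval `(0, ε)`. -/
theorem exists_v (f : E → E) (hfc : Continuous f) (θ : E) {δ M : ℝ} {K : NNReal}
    (hδ : 0 < δ) (hM : 1 ≤ M)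
    (hlip : LipschitzOnWith K f (Metric.closedBall θ δ))
    (hMb : ∀ x ∈ Metric.closedBall θ δ, ‖f x‖ ≤ M) :
    ∃ (ε N : ℝ) (v v' v'' : ℝ → E), 0 < ε ∧ 0 < N ∧
      ∀ t ∈ Set.Ioo (0:ℝ) ε,
        HasDerivAt v (v' t) t ∧ HasDerivAt v' (v'' t) t ∧
        v'' t + (2 / t) • v' t + f (v t) = 0 ∧
        ‖v t - θ‖ ≤ N * t ^ 2 ∧ ‖v' t‖ ≤ N * t := by
  set L : ℝ := (K : ℝ) with hL
  have hL0 : 0 ≤ L := K.coe_nonneg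
  set ε : ℝ := min (δ / (2 * M)) (min (1 / (2 * L + 2)) 1) with hε
  have hM0 : (0:ℝ) < M := lt_of_lt_of_le one_pos hM
  have hε0 : 0 < ε := by
    apply lt_min (by positivity) (lt_min (by positivity) one_pos)
  have hε1 : ε ≤ 1 := le_trans (min_le_right _ _) (min_le_right _ _)
  have hεδ : 2 * M * ε ^ 2 ≤ δ := by
    have h1 : ε ≤ δ / (2 * M) := min_le_left _ _
    calc 2 * M * ε ^ 2 = (2 * M * ε) * ε := by ring
    _ ≤ (2 * M * (δ / (2 * M))) * 1 := by
        apply mul_le_mul _ hε1 hε0.le (by positivity)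
        apply mul_le_mul_of_nonneg_left h1 (by positivity)
    _ = δ := by field_simp
  have hεL : 2 * L * ε ^ 2 < 1 := by
    have h1 : ε ≤ 1 / (2 * L + 2) := le_trans (min_le_right _ _) (min_le_left _ _)
    calc 2 * L * ε ^ 2 = (2 * L * ε) * ε := by ring
    _ ≤ (2 * L * (1 / (2 * L + 2))) * 1 := by
        apply mul_le_mul _ hε1 hε0.le (by positivity)
        apply mul_le_mul_of_nonneg_left h1 (by positivity)
    _ = 2 * L / (2 * L + 2) := by ring
    _ < 1 := by
        rw [div_lt_one (by positivity)]; linarith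
  -- the clamp function
  set c : ℝ → ℝ := fun t => max 0 (min t ε) with hc
  have hc_cont : Continuous c := continuous_const.max (continuous_id.min continuous_const)
  have hc_mem : ∀ t, c t ∈ Icc (0:ℝ) ε := fun t =>
    ⟨le_max_left _ _, max_le hε0.le (min_le_right _ _)⟩
  have hc_id : ∀ t ∈ Icc (0:ℝ) ε, c t = t := fun t ht => by
    simp only [hc]; rw [min_eq_left ht.2, max_eq_right ht.1]
  have hc0 : c 0 = 0 := hc_id 0 ⟨le_rfl, hε0.le⟩
  -- the integral operators
  set A : (ℝ → E) → ℝ → E := fun u τ => ∫ s in (0:ℝ)..τ, s ^ 1 • f (u s) with hA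
  set B : (ℝ → E) → ℝ → E := fun u τ => ∫ s in (0:ℝ)..τ, s ^ 2 • f (u s) with hB
  set G : (ℝ → E) → ℝ → E := fun u τ => θ - A u τ + τ⁻¹ • B u τ with hG
  -- basic estimates for u with values in the ball
  have key : ∀ u : ℝ → E, (∀ s, u s ∈ Metric.closedBall θ δ) → ∀ τ,
      ‖A u τ‖ ≤ M * |τ| ^ 2 ∧ ‖B u τ‖ ≤ M * |τ| ^ 3 := by
    intro u hu τ
    have hb : ∀ s, ‖f (u s)‖ ≤ M := fun s => hMb _ (hu s)
    exact ⟨norm_int_pow_smul_le hb 1 τ, norm_int_pow_smul_le hb 2 τ⟩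
  have hGθ : ∀ u : ℝ → E, (∀ s, u s ∈ Metric.closedBall θ δ) → ∀ τ,
      ‖G u τ - θ‖ ≤ 2 * M * |τ| ^ 2 := by
    intro u hu τ
    have hk := key u hu τ
    have : G u τ - θ = τ⁻¹ • B u τ - A u τ := by simp only [hG]; abel
    rw [this]
    calc ‖τ⁻¹ • B u τ - A u τ‖ ≤ ‖τ⁻¹ • B u τ‖ + ‖A u τ‖ := norm_sub_le _ _
    _ ≤ M * |τ| ^ 2 + M * |τ| ^ 2 :=
        add_le_add (inv_smul_norm_le hM0.le hk.2) hk.1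
    _ = 2 * M * |τ| ^ 2 := by ring
  -- continuity
  have hGcont : ∀ u : ℝ →ᵇ E, (∀ s, u s ∈ Metric.closedBall θ δ) →
      Continuous fun t => G u (c t) := by
    intro u hu
    have hfu : Continuous fun s => f (u s) := hfc.comp u.continuous
    have hint1 : ∀ a b : ℝ, IntervalIntegrable (fun s => s ^ 1 • f (u s)) volume a b :=
      fun a b => ((continuous_pow 1).smul hfu).intervalIntegrable a b
    have hint2 : ∀ a b : ℝ, IntervalIntegrable (fun s => s ^ 2 • f (u s)) volume a b :=
      fun a b => ((continuous_pow 2).smul hfu).intervalIntegrable a b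
    have hAcont : Continuous (A u) := intervalIntegral.continuous_primitive hint1 0
    have hBcont : Continuous (B u) := intervalIntegral.continuous_primitive hint2 0
    have hφ : Continuous fun τ => τ⁻¹ • B u τ := by
      rw [continuous_iff_continuousAt]
      intro τ
      rcases eq_or_ne τ 0 with rfl | hτ
      · have hval : (fun τ : ℝ => τ⁻¹ • B (⇑u) τ) 0 = 0 := by
          show (0:ℝ)⁻¹ • B (⇑u) 0 = 0
          simp [hB, intervalIntegral.integral_same]
        unfold ContinuousAt
        rw [hval]
        apply squeeze_zero_norm (a := fun τ => M * |τ| ^ 2)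
        · intro τ'
          exact inv_smul_norm_le hM0.le (key u hu τ').2
        · have : Continuous fun τ : ℝ => M * |τ| ^ 2 :=
            continuous_const.mul (continuous_abs.pow 2)
          have := this.tendsto 0
          simpa using this
      · exact ((continuousAt_inv₀ hτ).smul hBcont.continuousAt)
    exact (continuous_const.sub (hAcont.comp hc_cont)).add (hφ.comp hc_cont)
  -- the ball in the space of bounded continuous functions
  set S : Set (ℝ →ᵇ E) := Metric.closedBall (BoundedContinuousFunction.const ℝ θ) δ with hS
  have hmem_ball : ∀ u : ℝ →ᵇ E, u ∈ S → ∀ s, u s ∈ Metric.closedBall θ δ := by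
    intro u hu s
    rw [Metric.mem_closedBall]
    calc dist (u s) θ = dist (u s) ((BoundedContinuousFunction.const ℝ θ) s) := by
          simp
    _ ≤ dist u (BoundedContinuousFunction.const ℝ θ) := dist_coe_le_dist s
    _ ≤ δ := Metric.mem_closedBall.mp hu
  -- the Picard-type map
  have hbound : ∀ (u : ℝ →ᵇ E), (∀ s, u s ∈ Metric.closedBall θ δ) →
      ∀ t, ‖G u (c t)‖ ≤ ‖θ‖ + δ := by
    intro u hu t
    have h1 := hGθ u hu (c t)
    have h2 : |c t| ≤ ε := by
      rw [abs_of_nonneg (hc_mem t).1]; exact (hc_mem t).2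
    have h3 : 2 * M * |c t| ^ 2 ≤ δ := by
      calc 2 * M * |c t| ^ 2 ≤ 2 * M * ε ^ 2 := by
            have := abs_nonneg (c t); gcongr
      _ ≤ δ := hεδ
    calc ‖G u (c t)‖ = ‖θ + (G u (c t) - θ)‖ := by congr 1; abel
    _ ≤ ‖θ‖ + ‖G u (c t) - θ‖ := norm_add_le _ _
    _ ≤ ‖θ‖ + δ := by linarith
  set T : ↥S → ↥S := fun u =>
    ⟨BoundedContinuousFunction.ofNormedAddCommGroup (fun t => G u.1 (c t))
        (hGcont u.1 (hmem_ball u.1 u.2)) (‖θ‖ + δ) (hbound u.1 (hmem_ball u.1 u.2)),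
      by
        show _ ∈ Metric.closedBall (BoundedContinuousFunction.const ℝ θ) δ
        rw [Metric.mem_closedBall]
        rw [BoundedContinuousFunction.dist_le hδ.le]
        intro t
        rw [BoundedContinuousFunction.coe_ofNormedAddCommGroup]
        simp only [BoundedContinuousFunction.const_apply]
        rw [dist_eq_norm]
        have h1 := hGθ u.1 (hmem_ball u.1 u.2) (c t)
        have h3 : 2 * M * |c t| ^ 2 ≤ δ := by
          have h2 : |c t| ≤ ε := by
            rw [abs_of_nonneg (hc_mem t).1]; exact (hc_mem t).2
          calc 2 * M * |c t| ^ 2 ≤ 2 * M * ε ^ 2 := by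
                have := abs_nonneg (c t); gcongr
          _ ≤ δ := hεδ
        linarith⟩
    with hT
  have hTval : ∀ (u : ↥S) (t : ℝ), (T u).1 t = G u.1 (c t) := fun u t => rfl
  -- contraction estimate
  have hcontr : ContractingWith (Real.toNNReal (2 * L * ε ^ 2)) T := by
    constructor
    · rw [← NNReal.coe_lt_coe]
      rw [Real.coe_toNNReal _ (by positivity)]
      exact_mod_cast hεL
    · apply LipschitzWith.of_dist_le_mul
      intro u u'
      rw [Subtype.dist_eq, Subtype.dist_eq]
      set d : ℝ := dist u.1 u'.1 with hd
      have hd0 : 0 ≤ d := dist_nonneg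
      have hKc : (Real.toNNReal (2 * L * ε ^ 2) : ℝ) = 2 * L * ε ^ 2 :=
        Real.coe_toNNReal _ (by positivity)
      rw [hKc]
      rw [BoundedContinuousFunction.dist_le (by positivity)]
      intro t
      rw [dist_eq_norm, hTval u t, hTval u' t]
      -- pointwise: G u (c t) - G u' (c t)
      have hfu : Continuous fun s => f (u.1 s) := hfc.comp u.1.continuous
      have hfu' : Continuous fun s => f (u'.1 s) := hfc.comp u'.1.continuous
      have hlipd : ∀ s, ‖f (u.1 s) - f (u'.1 s)‖ ≤ L * d := by
        intro s
        rw [← dist_eq_norm]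
        calc dist (f (u.1 s)) (f (u'.1 s)) ≤ L * dist (u.1 s) (u'.1 s) :=
              hlip.dist_le_mul _ (hmem_ball u.1 u.2 s) _ (hmem_ball u'.1 u'.2 s)
        _ ≤ L * d := by
            apply mul_le_mul_of_nonneg_left (dist_coe_le_dist s) hL0
      have hdiffA : ∀ τ, A u.1 τ - A u'.1 τ =
          ∫ s in (0:ℝ)..τ, s ^ 1 • (f (u.1 s) - f (u'.1 s)) := by
        intro τ
        rw [hA]
        simp only
        rw [← intervalIntegral.integral_sub
          (show IntervalIntegrable (fun s => s ^ 1 • f (u.1 s)) volume 0 τ from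
            ((continuous_pow 1).smul hfu).intervalIntegrable 0 τ)
          (show IntervalIntegrable (fun s => s ^ 1 • f (u'.1 s)) volume 0 τ from
            ((continuous_pow 1).smul hfu').intervalIntegrable 0 τ)]
        congr 1
        ext s
        rw [smul_sub]
      have hdiffB : ∀ τ, B u.1 τ - B u'.1 τ =
          ∫ s in (0:ℝ)..τ, s ^ 2 • (f (u.1 s) - f (u'.1 s)) := by
        intro τ
        rw [hB]
        simp only
        rw [← intervalIntegral.integral_sub
          (show IntervalIntegrable (fun s => s ^ 2 • f (u.1 s)) volume 0 τ from
            ((continuous_pow 2).smul hfu).intervalIntegrable 0 τ)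
          (show IntervalIntegrable (fun s => s ^ 2 • f (u'.1 s)) volume 0 τ from
            ((continuous_pow 2).smul hfu').intervalIntegrable 0 τ)]
        congr 1
        ext s
        rw [smul_sub]
      set τ : ℝ := c t with hτ
      have hAest : ‖A u.1 τ - A u'.1 τ‖ ≤ L * d * |τ| ^ 2 := by
        rw [hdiffA]; exact norm_int_pow_smul_le hlipd 1 τ
      have hBest : ‖B u.1 τ - B u'.1 τ‖ ≤ L * d * |τ| ^ 3 := by
        rw [hdiffB]; exact norm_int_pow_smul_le hlipd 2 τ
      have hGdiff : G u.1 τ - G u'.1 τ =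
          τ⁻¹ • (B u.1 τ - B u'.1 τ) - (A u.1 τ - A u'.1 τ) := by
        simp only [hG, smul_sub]; abel
      have hτε : |τ| ≤ ε := by
        rw [hτ, abs_of_nonneg (hc_mem t).1]; exact (hc_mem t).2
      calc ‖G u.1 τ - G u'.1 τ‖
          ≤ ‖τ⁻¹ • (B u.1 τ - B u'.1 τ)‖ + ‖A u.1 τ - A u'.1 τ‖ := by
            rw [hGdiff]; exact norm_sub_le _ _
      _ ≤ L * d * |τ| ^ 2 + L * d * |τ| ^ 2 :=
          add_le_add (inv_smul_norm_le (by positivity) hBest) hAest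
      _ = 2 * L * |τ| ^ 2 * d := by ring
      _ ≤ 2 * L * ε ^ 2 * d := by
          have := abs_nonneg τ; gcongr
  -- the fixed point
  have hSne : Nonempty ↥S := ⟨⟨BoundedContinuousFunction.const ℝ θ, by
    show _ ∈ Metric.closedBall (BoundedContinuousFunction.const ℝ θ) δ
    rw [Metric.mem_closedBall, dist_self]; exact hδ.le⟩⟩
  have hScomp : CompleteSpace ↥S := IsClosed.completeSpace_coe (hs := Metric.isClosed_closedBall)
  set v₀ : ↥S := ContractingWith.fixedPoint T hcontr with hv₀
  have hfix0 : T v₀ = v₀ := ContractingWith.fixedPoint_isFixedPt hcontr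
  set vB : ℝ →ᵇ E := v₀.1 with hvB
  have hvBmem : ∀ s, vB s ∈ Metric.closedBall θ δ := hmem_ball vB v₀.2
  have hfix : ∀ t, G vB (c t) = vB t := by
    intro t
    have h1 : (T v₀).1 = vB := congrArg Subtype.val hfix0
    have h2 : (T v₀).1 t = vB t := by rw [h1]
    exact (hTval v₀ t).symm.trans h2
  have hfixI : ∀ t ∈ Icc (0:ℝ) ε, G vB t = vB t := by
    intro t ht
    have := hfix t
    rwa [hc_id t ht] at this
  -- the solution and its derivatives
  have hfvB : Continuous fun s => f (vB s) := hfc.comp vB.continuous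
  have hint1 : ∀ a b : ℝ, IntervalIntegrable (fun s => s ^ 1 • f (vB s)) volume a b :=
    fun a b => ((continuous_pow 1).smul hfvB).intervalIntegrable a b
  have hint2 : ∀ a b : ℝ, IntervalIntegrable (fun s => s ^ 2 • f (vB s)) volume a b :=
    fun a b => ((continuous_pow 2).smul hfvB).intervalIntegrable a b
  have hAd : ∀ t : ℝ, HasDerivAt (A vB) (t ^ 1 • f (vB t)) t := by
    intro t
    exact intervalIntegral.integral_hasDerivAt_right (hint1 0 t)
      (((continuous_pow 1).smul hfvB).stronglyMeasurableAtFilter _ _)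
      (((continuous_pow 1).smul hfvB).continuousAt)
  have hBd : ∀ t : ℝ, HasDerivAt (B vB) (t ^ 2 • f (vB t)) t := by
    intro t
    exact intervalIntegral.integral_hasDerivAt_right (hint2 0 t)
      (((continuous_pow 2).smul hfvB).stronglyMeasurableAtFilter _ _)
      (((continuous_pow 2).smul hfvB).continuousAt)
  refine ⟨ε, 2 * M, (fun t => vB t), (fun t => (-(t ^ 2)⁻¹) • B vB t),
    (fun t => (2 * (t ^ 3)⁻¹) • B vB t - f (vB t)), hε0, by positivity, ?_⟩
  intro t ht
  have ht0 : (0:ℝ) < t := ht.1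
  have htne : t ≠ 0 := ht0.ne'
  -- first derivative
  have hvd : HasDerivAt (fun τ => vB τ) ((-(t ^ 2)⁻¹) • B vB t) t := by
    have heq : (fun τ => vB τ) =ᶠ[nhds t] (fun τ => θ - A vB τ + τ⁻¹ • B vB τ) := by
      filter_upwards [isOpen_Ioo.mem_nhds ht] with τ hτ
      exact (hfixI τ ⟨hτ.1.le, hτ.2.le⟩).symm
    have hd : HasDerivAt (fun τ => θ - A vB τ + τ⁻¹ • B vB τ)
        ((0 - t ^ 1 • f (vB t)) + (t⁻¹ • (t ^ 2 • f (vB t)) + (-(t ^ 2)⁻¹) • B vB t)) t := by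
      exact ((hasDerivAt_const t θ).sub (hAd t)).add ((hasDerivAt_inv htne).smul (hBd t))
    have hval : (0 - t ^ 1 • f (vB t)) + (t⁻¹ • (t ^ 2 • f (vB t)) + (-(t ^ 2)⁻¹) • B vB t)
        = (-(t ^ 2)⁻¹) • B vB t := by
      rw [smul_smul]
      match_scalars <;> (try field_simp) <;> (try ring)
    rw [hval] at hd
    exact hd.congr_of_eventuallyEq heq
  refine ⟨hvd, ?_, ?_, ?_, ?_⟩
  -- second derivative
  · have hcd : HasDerivAt (fun τ : ℝ => -(τ ^ 2)⁻¹) (2 * (t ^ 3)⁻¹) t := by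
      have h1 : HasDerivAt (fun τ : ℝ => τ ^ 2) (2 * t) t := by
        simpa using hasDerivAt_pow 2 t
      have h2 := (h1.inv (by positivity)).neg
      refine h2.congr_deriv ?_
      field_simp
    have hd := hcd.smul (hBd t)
    have hval : (-(t ^ 2)⁻¹) • (t ^ 2 • f (vB t)) + (2 * (t ^ 3)⁻¹) • B vB t
        = (2 * (t ^ 3)⁻¹) • B vB t - f (vB t) := by
      rw [smul_smul]
      match_scalars <;> (try field_simp) <;> (try ring)
    rw [hval] at hd
    exact hd
  -- the ODE
  · rw [smul_smul]
    have hs : (2 / t) * (-(t ^ 2)⁻¹) = -(2 * (t ^ 3)⁻¹) := by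
      field_simp
    rw [hs]
    match_scalars <;> (try field_simp) <;> (try ring)
  -- the bounds
  · have h1 : vB t - θ = t⁻¹ • B vB t - A vB t := by
      have := (hfixI t ⟨ht0.le, ht.2.le⟩).symm
      rw [this]
      simp only [hG]
      abel
    rw [h1]
    have hk := key vB hvBmem t
    have habs : |t| = t := abs_of_pos ht0
    calc ‖t⁻¹ • B vB t - A vB t‖ ≤ ‖t⁻¹ • B vB t‖ + ‖A vB t‖ := norm_sub_le _ _
    _ ≤ M * |t| ^ 2 + M * |t| ^ 2 :=
        add_le_add (inv_smul_norm_le hM0.le hk.2) hk.1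
    _ = 2 * M * t ^ 2 := by rw [habs]; ring
  · have hk := (key vB hvBmem t).2
    have habs : |t| = t := abs_of_pos ht0
    rw [habs] at hk
    rw [norm_smul]
    have hns : ‖-(t ^ 2)⁻¹‖ = (t ^ 2)⁻¹ := by
      rw [Real.norm_eq_abs, abs_neg, abs_inv, abs_pow, habs]
    rw [hns]
    calc (t ^ 2)⁻¹ * ‖B vB t‖ ≤ (t ^ 2)⁻¹ * (M * t ^ 3) := by gcongr
    _ = M * t := by field_simp
    _ ≤ 2 * M * t := by nlinarith

end StatSol

open StatSol in
set_option maxHeartbeats 1000000 in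
theorem stmt1 (m : ℕ) (hm : 1 ≤ m)
    (f : EuclideanSpace ℝ (Fin m) → EuclideanSpace ℝ (Fin m))
    (hf : ContDiff ℝ 2 f)
    (hhom : ∀ c : ℝ, 0 ≤ c → ∀ x, f (c • x) = c ^ 5 • f x)
    (θ : EuclideanSpace ℝ (Fin m)) :
    ∃ (R C : ℝ) (Z Z' Z'' : ℝ → EuclideanSpace ℝ (Fin m)),
      0 < R ∧ 0 < C ∧
      (∀ r, R ≤ r → HasDerivAt Z (Z' r) r ∧ HasDerivAt Z' (Z'' r) r) ∧
      ContinuousOn Z'' (Ici R) ∧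
      (∀ r, R < r → Z'' r + (2 / r) • Z' r + f (Z r) = 0) ∧
      (∀ r, R ≤ r →
        ‖Z r - r⁻¹ • θ‖ ≤ C / r ^ 3 ∧ ‖Z' r + (r ^ 2)⁻¹ • θ‖ ≤ C / r ^ 4) := by
  classical
  -- local Lipschitz constant near θ
  obtain ⟨K, tset, htset, hlipt⟩ :=
    ((hf.of_le (by norm_num)).contDiffAt (x := θ)).exists_lipschitzOnWith
  obtain ⟨δ, hδ0, hδsub⟩ := Metric.mem_nhds_iff.mp htset
  have hsub : Metric.closedBall θ (δ / 2) ⊆ tset :=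
    (Metric.closedBall_subset_ball (by linarith)).trans hδsub
  have hlip : LipschitzOnWith K f (Metric.closedBall θ (δ / 2)) := hlipt.mono hsub
  -- bound for f on the ball
  obtain ⟨M₀, hM₀⟩ := (isCompact_closedBall θ (δ / 2)).exists_bound_of_continuousOn
    hf.continuous.continuousOn
  have hM : (1:ℝ) ≤ max M₀ 1 := le_max_right _ _
  have hMb : ∀ x ∈ Metric.closedBall θ (δ / 2), ‖f x‖ ≤ max M₀ 1 :=
    fun x hx => (hM₀ x hx).trans (le_max_left _ _)
  obtain ⟨ε, N, v, v', v'', hε0, hN0, hmain⟩ :=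
    exists_v f hf.continuous θ (by linarith : (0:ℝ) < δ / 2) hM hlip hMb
  -- membership of r⁻¹ in (0, ε) for r ≥ 2/ε
  have hmem : ∀ r : ℝ, 2 / ε ≤ r → 0 < r ∧ r⁻¹ ∈ Ioo (0:ℝ) ε := by
    intro r hr
    have hR0 : (0:ℝ) < 2 / ε := by positivity
    have hr0 : 0 < r := lt_of_lt_of_le hR0 hr
    refine ⟨hr0, ⟨by positivity, ?_⟩⟩
    have h1 : r⁻¹ ≤ (2 / ε)⁻¹ := by
      apply inv_anti₀ hR0 hr
    have h2 : (2 / ε)⁻¹ = ε / 2 := by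
      field_simp
    rw [h2] at h1
    linarith
  set Z : ℝ → EuclideanSpace ℝ (Fin m) := fun r => r⁻¹ • v r⁻¹ with hZ
  set Z' : ℝ → EuclideanSpace ℝ (Fin m) :=
    fun r => (-(r ^ 2)⁻¹) • v r⁻¹ + (-(r ^ 3)⁻¹) • v' r⁻¹ with hZ'
  set Z'' : ℝ → EuclideanSpace ℝ (Fin m) :=
    fun r => -((2 / r) • Z' r) - f (Z r) with hZ''
  -- first derivative
  have hZd : ∀ r : ℝ, 2 / ε ≤ r → HasDerivAt Z (Z' r) r := by
    intro r hr
    obtain ⟨hr0, ht⟩ := hmem r hr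
    obtain ⟨hvd, hv'd, hode, hb1, hb2⟩ := hmain r⁻¹ ht
    have hinv : HasDerivAt (fun x : ℝ => x⁻¹) (-(r ^ 2)⁻¹) r := hasDerivAt_inv hr0.ne'
    have hcomp : HasDerivAt (fun x : ℝ => v x⁻¹) ((-(r ^ 2)⁻¹) • v' r⁻¹) r :=
      hvd.scomp r hinv
    have h := hinv.smul hcomp
    have hval : r⁻¹ • ((-(r ^ 2)⁻¹) • v' r⁻¹) + (-(r ^ 2)⁻¹) • v r⁻¹ = Z' r := by
      rw [hZ']
      rw [smul_smul]
      match_scalars <;> (try field_simp) <;> (try ring)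
    rw [hval] at h
    exact h
  -- second derivative
  have hZ'd : ∀ r : ℝ, 2 / ε ≤ r → HasDerivAt Z' (Z'' r) r := by
    intro r hr
    obtain ⟨hr0, ht⟩ := hmem r hr
    obtain ⟨hvd, hv'd, hode, hb1, hb2⟩ := hmain r⁻¹ ht
    have hinv : HasDerivAt (fun x : ℝ => x⁻¹) (-(r ^ 2)⁻¹) r := hasDerivAt_inv hr0.ne'
    have hcompv : HasDerivAt (fun x : ℝ => v x⁻¹) ((-(r ^ 2)⁻¹) • v' r⁻¹) r :=
      hvd.scomp r hinv
    have hcompv' : HasDerivAt (fun x : ℝ => v' x⁻¹) ((-(r ^ 2)⁻¹) • v'' r⁻¹) r :=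
      hv'd.scomp r hinv
    have hc1 : HasDerivAt (fun x : ℝ => -(x ^ 2)⁻¹) (2 * (r ^ 3)⁻¹) r := by
      have h1 : HasDerivAt (fun x : ℝ => x ^ 2) (2 * r) r := by
        simpa using hasDerivAt_pow 2 r
      have h2 := (h1.inv (by positivity)).neg
      refine h2.congr_deriv ?_
      field_simp
    have hc2 : HasDerivAt (fun x : ℝ => -(x ^ 3)⁻¹) (3 * (r ^ 4)⁻¹) r := by
      have h1 : HasDerivAt (fun x : ℝ => x ^ 3) (3 * r ^ 2) r := by
        simpa using hasDerivAt_pow 3 r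
      have h2 := (h1.inv (by positivity)).neg
      refine h2.congr_deriv ?_
      field_simp
    have h := (hc1.smul hcompv).add (hc2.smul hcompv')
    have hode' : f (v r⁻¹) + (v'' r⁻¹ + (2 / r⁻¹) • v' r⁻¹) = 0 := by
      rw [add_comm]; exact hode
    have hfv : f (v r⁻¹) = -(v'' r⁻¹ + (2 / r⁻¹) • v' r⁻¹) :=
      eq_neg_of_add_eq_zero_left hode' 
    have hf5 : f (r⁻¹ • v r⁻¹) = (r⁻¹) ^ 5 • f (v r⁻¹) :=
      hhom r⁻¹ (by positivity) (v r⁻¹)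
    have hval : (-(r ^ 2)⁻¹) • ((-(r ^ 2)⁻¹) • v' r⁻¹) + (2 * (r ^ 3)⁻¹) • v r⁻¹
        + ((-(r ^ 3)⁻¹) • ((-(r ^ 2)⁻¹) • v'' r⁻¹) + (3 * (r ^ 4)⁻¹) • v' r⁻¹)
        = Z'' r := by
      have e1 : Z'' r = -((2 / r) • Z' r) - f (Z r) := rfl
      have e2 : Z' r = -(r ^ 2)⁻¹ • v r⁻¹ + -(r ^ 3)⁻¹ • v' r⁻¹ := rfl
      have e3 : Z r = r⁻¹ • v r⁻¹ := rfl
      rw [e1, e2, e3, hf5, hfv]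
      rw [smul_smul, smul_smul]
      have hrne : r ≠ 0 := hr0.ne'
      match_scalars <;> field_simp <;> ring
    rw [hval] at h
    exact h
  have hR0 : (0:ℝ) < 2 / ε := by positivity
  refine ⟨2 / ε, 2 * N, Z, Z', Z'', hR0, by positivity,
    fun r hr => ⟨hZd r hr, hZ'd r hr⟩, ?_, ?_, ?_⟩
  · -- continuity of Z''
    have hZc : ContinuousOn Z (Ici (2 / ε)) := fun r hr =>
      ((hZd r hr).continuousAt).continuousWithinAt
    have hZ'c : ContinuousOn Z' (Ici (2 / ε)) := fun r hr =>
      ((hZ'd r hr).continuousAt).continuousWithinAt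
    have h2r : ContinuousOn (fun r : ℝ => 2 / r) (Ici (2 / ε)) := by
      apply ContinuousOn.div continuousOn_const continuousOn_id
      intro r hr
      exact (lt_of_lt_of_le hR0 hr).ne'
    exact ((h2r.smul hZ'c).neg).sub (hf.continuous.comp_continuousOn hZc)
  · -- the ODE
    intro r hr
    rw [hZ'']
    simp only
    abel
  · -- the bounds
    intro r hr
    obtain ⟨hr0, ht⟩ := hmem r hr
    obtain ⟨hvd, hv'd, hode, hb1, hb2⟩ := hmain r⁻¹ ht
    have hrne : r ≠ 0 := hr0.ne'
    constructor
    · have h1 : Z r - r⁻¹ • θ = r⁻¹ • (v r⁻¹ - θ) := by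
        rw [hZ, smul_sub]
      rw [h1, norm_smul, Real.norm_eq_abs, abs_inv, abs_of_pos hr0]
      calc r⁻¹ * ‖v r⁻¹ - θ‖ ≤ r⁻¹ * (N * (r⁻¹) ^ 2) :=
        mul_le_mul_of_nonneg_left hb1 (by positivity)
      _ = N / r ^ 3 := by
          rw [div_eq_mul_inv, ← inv_pow]; ring
      _ ≤ 2 * N / r ^ 3 := by
          have h3 : (0:ℝ) < r ^ 3 := by positivity
          rw [div_le_div_iff₀ h3 h3]
          nlinarith
    · have h1 : Z' r + (r ^ 2)⁻¹ • θ
          = (-(r ^ 2)⁻¹) • (v r⁻¹ - θ) + (-(r ^ 3)⁻¹) • v' r⁻¹ := by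
        rw [hZ']
        rw [smul_sub]
        match_scalars <;> (try field_simp) <;> (try ring)
      rw [h1]
      have e2 : ‖(-(r ^ 2)⁻¹) • (v r⁻¹ - θ)‖ ≤ (r ^ 2)⁻¹ * (N * (r⁻¹) ^ 2) := by
        rw [norm_smul, Real.norm_eq_abs, abs_neg, abs_inv, abs_pow, abs_of_pos hr0]
        gcongr
      have e3 : ‖(-(r ^ 3)⁻¹) • v' r⁻¹‖ ≤ (r ^ 3)⁻¹ * (N * r⁻¹) := by
        rw [norm_smul, Real.norm_eq_abs, abs_neg, abs_inv, abs_pow, abs_of_pos hr0]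
        gcongr
      calc ‖(-(r ^ 2)⁻¹) • (v r⁻¹ - θ) + (-(r ^ 3)⁻¹) • v' r⁻¹‖
          ≤ ‖(-(r ^ 2)⁻¹) • (v r⁻¹ - θ)‖ + ‖(-(r ^ 3)⁻¹) • v' r⁻¹‖ := norm_add_le _ _
      _ ≤ (r ^ 2)⁻¹ * (N * (r⁻¹) ^ 2) + (r ^ 3)⁻¹ * (N * r⁻¹) := add_le_add e2 e3
      _ = 2 * N / r ^ 4 := by
          rw [div_eq_mul_inv, ← inv_pow]; ring
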